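/- Let d ≥ 2 and let P ⊆ ℝ^d be a closed convex cone spanning ℝ^d with P ∩ (−P) = {0}, and let Ω be the interior of P. Then P and −(Ωᶜ) are not translates of each other: for every z ∈ ℝ^d, P ≠ {−x + z : x ∈ ℝ^d, x ∉ Ω}. -/

import Mathlib

/-- For `d ≥ 2` and a closed convex cone `P ⊆ ℝ^d` spanning `ℝ^d` with
`P ∩ (−P) = {0}` (with interior `Ω`), `P` and `−(Ωᶜ)` are not translates of each other. -/
theorem cone_not_translate_of_neg_compl_interior {d : ℕ} (hd : 2 ≤ d)
    (P : Set (EuclideanSpace ℝ (Fin d)))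
    (hPclosed : IsClosed P)
    (hPadd : ∀ x ∈ P, ∀ y ∈ P, x + y ∈ P)
    (hPsmul : ∀ (t : ℝ), 0 ≤ t → ∀ x ∈ P, t • x ∈ P)
    (hPspan : Submodule.span ℝ P = ⊤)
    (hPpointed : P ∩ (-P) = {0}) :
    ∀ z : EuclideanSpace ℝ (Fin d), P ≠ (fun x => -x + z) '' (interior P)ᶜ := by
  intro z hPz
  -- membership characterization
  have hmem : ∀ y : EuclideanSpace ℝ (Fin d), y ∈ P ↔ z - y ∉ interior P := by
    intro y
    constructor
    · intro hy hzi
      rw [hPz] at hy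
      obtain ⟨x, hx, hxy⟩ := hy
      have hxe : x = z - y := by
        have h' : -x + z = y := hxy
        rw [← h']
        abel
      rw [hxe] at hx
      exact hx hzi
    · intro h
      rw [hPz]
      refine ⟨z - y, h, ?_⟩
      show -(z - y) + z = y
      abel
  -- pointedness
  have hpt : ∀ a, a ∈ P → -a ∈ P → a = 0 := by
    intro a h1 h2
    have : a ∈ P ∩ (-P) := ⟨h1, by simpa using h2⟩
    rw [hPpointed] at this
    exact this
  -- limit lemma
  have hlim : ∀ a b : EuclideanSpace ℝ (Fin d), (∀ t : ℝ, 0 < t → a - t • b ∈ P) →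
      -b ∈ P := by
    intro a b h
    have key : ∀ t : ℝ, 0 < t → (1/t) • a - b ∈ P := by
      intro t ht
      have := hPsmul (1/t) (by positivity) _ (h t ht)
      rwa [smul_sub, smul_smul, one_div_mul_cancel ht.ne', one_smul] at this
    have h0 : Filter.Tendsto (fun t : ℝ => 1/t) Filter.atTop (nhds 0) := by
      simpa only [one_div] using tendsto_inv_atTop_zero
    have htend : Filter.Tendsto (fun t : ℝ => (1/t) • a - b) Filter.atTop (nhds (-b)) := by
      have := (h0.smul_const a).sub_const b
      simpa using this
    exact hPclosed.mem_of_tendsto htend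
      (Filter.eventually_atTop.2 ⟨1, fun t ht => key t (by linarith)⟩)
  -- dichotomy: P ∪ (-P) = univ
  have hdich : ∀ y : EuclideanSpace ℝ (Fin d), y ∉ P → -y ∈ P := by
    intro y hy
    apply hlim z y
    intro t ht
    have hty : t • y ∉ P := by
      intro h
      have := hPsmul (1/t) (by positivity) _ h
      rw [smul_smul, one_div_mul_cancel ht.ne', one_smul] at this
      exact hy this
    have : z - t • y ∈ interior P := by
      by_contra h
      exact hty ((hmem (t • y)).2 h)
    exact interior_subset this
  -- pick basis-like vectors in P
  have hex : ∀ i : Fin d, ∃ v : EuclideanSpace ℝ (Fin d),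
      v ∈ P ∧ v i ≠ 0 ∧ ∀ j ≠ i, v j = 0 := by
    intro i
    by_cases h : EuclideanSpace.single i (1:ℝ) ∈ P
    · refine ⟨_, h, by simp, fun j hj => by simp [EuclideanSpace.single_apply, hj]⟩
    · refine ⟨-EuclideanSpace.single i 1, hdich _ h, by simp, fun j hj => ?_⟩
      simp [EuclideanSpace.single_apply, hj]
  obtain ⟨x, hxP, hx0, hxj⟩ := hex ⟨0, by omega⟩
  obtain ⟨y, hyP, hy1, hyj⟩ := hex ⟨1, by omega⟩
  have hne : (⟨0, by omega⟩ : Fin d) ≠ ⟨1, by omega⟩ := by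
    intro h
    exact absurd (congrArg Fin.val h) (by simp)
  have hy0 : y ⟨0, by omega⟩ = 0 := hyj _ hne
  -- the set B
  set B : Set ℝ := {t : ℝ | 0 ≤ t ∧ t • y - x ∈ P} with hB
  have hBclosed : IsClosed B := by
    have : B = Set.Ici 0 ∩ (fun t : ℝ => t • y - x) ⁻¹' P := by
      ext t; simp [hB, Set.mem_setOf_eq, and_comm]
    rw [this]
    exact isClosed_Ici.inter (hPclosed.preimage ((continuous_id.smul continuous_const).sub continuous_const))
  have hBne : B.Nonempty := by
    by_contra hBe
    rw [Set.not_nonempty_iff_eq_empty] at hBe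
    have hall : ∀ t : ℝ, 0 < t → x - t • y ∈ P := by
      intro t ht
      have h1 : t ∉ B := by rw [hBe]; exact Set.notMem_empty t
      have h2 : t • y - x ∉ P := fun h => h1 ⟨ht.le, h⟩
      simpa using hdich _ h2
    have hyneg := hlim x y hall
    have hz := hpt y hyP hyneg
    rw [hz] at hy1
    simp at hy1
  have hBbdd : BddBelow B := ⟨0, fun t ht => ht.1⟩
  set s : ℝ := sInf B with hs
  have hsB : s ∈ B := hBclosed.csInf_mem hBne hBbdd
  have hs0 : 0 < s := by
    rcases lt_or_eq_of_le hsB.1 with h | h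
    · exact h
    · exfalso
      have : -x ∈ P := by
        have := hsB.2
        rw [← h, zero_smul, zero_sub] at this
        exact this
      have hx00 := hpt x hxP this
      rw [hx00] at hx0
      simp at hx0
  -- for t < s, x - t•y ∈ P
  have hleft : ∀ t : ℝ, 0 ≤ t → t < s → x - t • y ∈ P := by
    intro t ht hts
    have htB : t ∉ B := fun h => absurd (csInf_le hBbdd h) (by linarith)
    have : t • y - x ∉ P := fun h => htB ⟨ht, h⟩
    have := hdich _ this
    simpa using this
  have hxs : x - s • y ∈ P := by
    have hcont : Filter.Tendsto (fun t : ℝ => x - t • y) (nhdsWithin s (Set.Iio s))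
        (nhds (x - s • y)) := by
      exact ((continuous_const.sub (continuous_id.smul continuous_const)).tendsto s).mono_left
        nhdsWithin_le_nhds
    refine hPclosed.mem_of_tendsto hcont ?_
    filter_upwards [Ioo_mem_nhdsLT_of_mem (⟨hs0, le_refl s⟩ : s ∈ Set.Ioc 0 s)] with t ht
    exact hleft t ht.1.le ht.2
  have hfinal := hpt _ hxs (by simpa [neg_sub] using hsB.2)
  have : x = s • y := by
    have := sub_eq_zero.1 hfinal
    exact this
  have hc : x ⟨0, by omega⟩ = s * y ⟨0, by omega⟩ := by rw [this, PiLp.smul_apply, smul_eq_mul]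
  rw [hy0, mul_zero] at hc
  exact hx0 hc
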